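/- Let α be a positive algebraic number such that the additive monoid N₀[α] is atomic. If N₀[α] is not finitely generated, then the elasticity of N₀[α] is infinite. -/

import Mathlib

/-- `N₀[α]`: the additive submonoid of ℝ generated by the powers of `α`. -/
def Nmon (α : ℝ) : AddSubmonoid ℝ := AddSubmonoid.closure (Set.range fun n : ℕ => α ^ n)

/-- `a` is an atom of the submonoid `M`. -/
def IsAtomOf (M : AddSubmonoid ℝ) (a : ℝ) : Prop :=
  a ∈ M ∧ a ≠ 0 ∧ ∀ b c : ℝ, b ∈ M → c ∈ M → a = b + c → b = 0 ∨ c = 0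

/-- `M` is atomic: every nonzero element is a sum of atoms. -/
def IsAtomicM (M : AddSubmonoid ℝ) : Prop :=
  ∀ x ∈ M, x ≠ 0 → ∃ S : Multiset ℝ, (∀ a ∈ S, IsAtomOf M a) ∧ S.sum = x

/-- The set of factorization lengths of `x` in `M`. -/
def LSet (M : AddSubmonoid ℝ) (x : ℝ) : Set ℕ :=
  {n | ∃ S : Multiset ℝ, (∀ a ∈ S, IsAtomOf M a) ∧ S.sum = x ∧ Multiset.card S = n}

namespace Stmt7Aux

/-- value of a multiset of exponents -/
def val (α : ℝ) (T : Multiset ℕ) : ℝ := (T.map fun n => α ^ n).sum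

@[simp] lemma val_zero (α : ℝ) : val α 0 = 0 := rfl

@[simp] lemma val_cons (α : ℝ) (n : ℕ) (T : Multiset ℕ) :
    val α (n ::ₘ T) = α ^ n + val α T := by simp [val]

@[simp] lemma val_add (α : ℝ) (T U : Multiset ℕ) :
    val α (T + U) = val α T + val α U := by simp [val]

@[simp] lemma val_replicate (α : ℝ) (k n : ℕ) :
    val α (Multiset.replicate k n) = k * α ^ n := by
  simp [val, Multiset.map_replicate, Multiset.sum_replicate, nsmul_eq_mul]

lemma val_nonneg {α : ℝ} (h0 : 0 < α) (T : Multiset ℕ) : 0 ≤ val α T := by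
  apply Multiset.sum_nonneg
  intro x hx
  obtain ⟨n, -, rfl⟩ := Multiset.mem_map.1 hx
  positivity

lemma val_eq_zero {α : ℝ} (h0 : 0 < α) {T : Multiset ℕ} (h : val α T = 0) : T = 0 := by
  by_contra hT
  obtain ⟨n, hn⟩ := Multiset.exists_mem_of_ne_zero hT
  have h1 : α ^ n ≤ val α T := by
    refine Multiset.single_le_sum ?_ _ (Multiset.mem_map_of_mem _ hn)
    intro x hx
    obtain ⟨i, -, rfl⟩ := Multiset.mem_map.1 hx
    positivity
  have h2 : 0 < α ^ n := pow_pos h0 n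
  linarith

lemma val_pos {α : ℝ} (h0 : 0 < α) {T : Multiset ℕ} (hT : T ≠ 0) : 0 < val α T :=
  lt_of_le_of_ne (val_nonneg h0 T) fun h => hT (val_eq_zero h0 h.symm)

lemma pow_mem (α : ℝ) (n : ℕ) : α ^ n ∈ Nmon α :=
  AddSubmonoid.subset_closure ⟨n, rfl⟩

lemma val_mem (α : ℝ) (T : Multiset ℕ) : val α T ∈ Nmon α := by
  refine AddSubmonoid.multiset_sum_mem _ _ ?_
  intro x hx
  obtain ⟨n, -, rfl⟩ := Multiset.mem_map.1 hx
  exact pow_mem α n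

lemma exists_val {α a : ℝ} (ha : a ∈ Nmon α) : ∃ T : Multiset ℕ, val α T = a := by
  induction ha using AddSubmonoid.closure_induction with
  | mem x hx => obtain ⟨n, rfl⟩ := hx; exact ⟨{n}, by simp [val]⟩
  | zero => exact ⟨0, rfl⟩
  | add x y hx hy ihx ihy =>
      obtain ⟨T, rfl⟩ := ihx; obtain ⟨U, rfl⟩ := ihy
      exact ⟨T + U, by simp⟩

lemma val_map_add (α : ℝ) (j : ℕ) (T : Multiset ℕ) :
    val α (T.map fun t => j + t) = α ^ j * val α T := by
  simp only [val, Multiset.map_map, Function.comp]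
  rw [← Multiset.sum_map_mul_left]
  congr 1
  apply Multiset.map_congr rfl
  intro t _
  rw [pow_add]

lemma pow_mul_mem {α b : ℝ} (j : ℕ) (hb : b ∈ Nmon α) : α ^ j * b ∈ Nmon α := by
  obtain ⟨T, rfl⟩ := exists_val hb
  rw [← val_map_add]
  exact val_mem _ _

/-- product of exponent multisets -/
def mulE (T U : Multiset ℕ) : Multiset ℕ := T.bind fun t => U.map fun u => t + u

lemma val_mulE (α : ℝ) (T U : Multiset ℕ) : val α (mulE T U) = val α T * val α U := by
  simp only [mulE, val, Multiset.map_bind, Multiset.sum_bind, Multiset.map_map, Function.comp]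
  rw [← Multiset.sum_map_mul_right]
  apply congrArg
  apply Multiset.map_congr rfl
  intro t _
  rw [← Multiset.sum_map_mul_left]
  apply congrArg
  apply Multiset.map_congr rfl
  intro u _
  rw [pow_add]

lemma card_mulE (T U : Multiset ℕ) :
    Multiset.card (mulE T U) = Multiset.card T * Multiset.card U := by
  simp only [mulE, Multiset.card_bind, Multiset.map_map, Function.comp, Multiset.card_map]
  rw [Multiset.map_const', Multiset.sum_replicate, smul_eq_mul]

/-- power of exponent multisets -/
def powE (T : Multiset ℕ) : ℕ → Multiset ℕ
  | 0 => {0}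
  | k + 1 => mulE T (powE T k)

lemma val_powE (α : ℝ) (T : Multiset ℕ) (k : ℕ) : val α (powE T k) = (val α T) ^ k := by
  induction k with
  | zero => simp [powE, val]
  | succ k ih => rw [powE, val_mulE, ih, pow_succ]; ring

lemma card_powE (T : Multiset ℕ) (k : ℕ) :
    Multiset.card (powE T k) = (Multiset.card T) ^ k := by
  induction k with
  | zero => simp [powE]
  | succ k ih => rw [powE, card_mulE, ih, pow_succ]; ring

lemma atoms_are_powers {α a : ℝ} (h0 : 0 < α) (ha : IsAtomOf (Nmon α) a) :
    ∃ n : ℕ, a = α ^ n := by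
  obtain ⟨hmem, hne, hsplit⟩ := ha
  obtain ⟨T, rfl⟩ := exists_val hmem
  have hT : T ≠ 0 := fun h => hne (by simp [h])
  obtain ⟨t, ht⟩ := Multiset.exists_mem_of_ne_zero hT
  obtain ⟨T', rfl⟩ := Multiset.exists_cons_of_mem ht
  rcases hsplit (α ^ t) (val α T') (pow_mem α t) (val_mem α T') (by simp) with h | h
  · exact absurd h (ne_of_gt (pow_pos h0 t))
  · exact ⟨t, by simp [h]⟩

lemma all_powers_atoms {α : ℝ} (h0 : 0 < α) (hat : IsAtomicM (Nmon α))
    (hfg : ¬ (Nmon α).FG) : ∀ n : ℕ, IsAtomOf (Nmon α) (α ^ n) := by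
  by_contra hcon
  push_neg at hcon
  obtain ⟨m, hm⟩ := hcon
  have hpow : α ^ m ∈ Nmon α := pow_mem α m
  have hne : α ^ m ≠ 0 := ne_of_gt (pow_pos h0 m)
  have hsplit : ∃ b c : ℝ, b ∈ Nmon α ∧ c ∈ Nmon α ∧ α ^ m = b + c ∧ b ≠ 0 ∧ c ≠ 0 := by
    by_contra h
    push_neg at h
    exact hm ⟨hpow, hne, fun b c hb hc heq => by
      by_contra hor
      push_neg at hor
      exact hor.2 (h b c hb hc heq hor.1)⟩
  obtain ⟨b, c, hb, hc, heq, hb0, hc0⟩ := hsplit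
  -- every atom is α ^ i with i < m
  have hatomlt : ∀ a : ℝ, IsAtomOf (Nmon α) a → ∃ i < m, a = α ^ i := by
    intro a haa
    obtain ⟨i, rfl⟩ := atoms_are_powers h0 haa
    refine ⟨i, ?_, rfl⟩
    by_contra hge
    push_neg at hge
    have hi : α ^ i = α ^ (i - m) * b + α ^ (i - m) * c := by
      rw [← mul_add, ← heq, ← pow_add]
      congr 1
      omega
    rcases haa.2.2 _ _ (pow_mul_mem _ hb) (pow_mul_mem _ hc) hi with h | h
    · exact (mul_ne_zero (ne_of_gt (pow_pos h0 _)) hb0) h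
    · exact (mul_ne_zero (ne_of_gt (pow_pos h0 _)) hc0) h
  apply hfg
  refine ⟨(Finset.range m).image fun i => α ^ i, le_antisymm ?_ ?_⟩
  · rw [AddSubmonoid.closure_le]
    intro x hx
    simp only [Finset.coe_image, Set.mem_image] at hx
    obtain ⟨i, -, rfl⟩ := hx
    exact pow_mem α i
  · intro x hx
    by_cases hx0 : x = 0
    · subst hx0; exact zero_mem _
    obtain ⟨S, hS, rfl⟩ := hat x hx hx0
    refine AddSubmonoid.multiset_sum_mem _ _ ?_
    intro a haS
    obtain ⟨i, him, rfl⟩ := hatomlt a (hS a haS)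
    apply AddSubmonoid.subset_closure
    simp only [Finset.coe_image, Set.mem_image, Finset.mem_coe, Finset.mem_range]
    exact ⟨i, him, rfl⟩

lemma exists_rel {α : ℝ} (h0 : 0 < α) (halg : IsAlgebraic ℚ α) (hne1 : α ≠ 1) :
    ∃ T U : Multiset ℕ, val α T = val α U ∧
      0 < Multiset.card T ∧ Multiset.card T < Multiset.card U := by
  have halgZ : IsAlgebraic ℤ α := (IsFractionRing.isAlgebraic_iff ℤ ℚ ℝ).2 halg
  obtain ⟨P, hP0, hPα⟩ := halgZ
  obtain ⟨Q, hQeq, hQnd⟩ := P.exists_eq_pow_rootMultiplicity_mul_and_not_dvd hP0 1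
  have hQ1 : Q.eval 1 ≠ 0 := fun h => hQnd (Polynomial.dvd_iff_isRoot.2 h)
  have hQα : Polynomial.aeval α Q = 0 := by
    rw [hQeq] at hPα
    simp only [map_mul, map_pow, map_sub, Polynomial.aeval_X, Polynomial.aeval_C] at hPα
    have h1 : ((algebraMap ℤ ℝ) 1 : ℝ) = 1 := by simp
    rw [h1] at hPα
    have : (α - 1) ^ P.rootMultiplicity 1 ≠ 0 := pow_ne_zero _ (sub_ne_zero.2 hne1)
    exact (mul_eq_zero.1 hPα).resolve_left this
  classical
  set T : Multiset ℕ := ∑ i ∈ Q.support, Multiset.replicate (Q.coeff i).toNat i with hT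
  set U : Multiset ℕ := ∑ i ∈ Q.support, Multiset.replicate (-(Q.coeff i)).toNat i with hU
  have val_sum : ∀ (f : ℕ → Multiset ℕ),
      val α (∑ i ∈ Q.support, f i) = ∑ i ∈ Q.support, val α (f i) := by
    intro f
    induction Q.support using Finset.induction_on with
    | empty => simp
    | insert _ _ h ih => rw [Finset.sum_insert h, Finset.sum_insert h, val_add, ih]
  have card_sum : ∀ (f : ℕ → Multiset ℕ),
      Multiset.card (∑ i ∈ Q.support, f i) = ∑ i ∈ Q.support, Multiset.card (f i) := by
    intro f
    induction Q.support using Finset.induction_on with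
    | empty => simp
    | insert _ _ h ih => rw [Finset.sum_insert h, Finset.sum_insert h, Multiset.card_add, ih]
  have hvalTU : val α T = val α U := by
    have hdiff : val α T - val α U = ∑ i ∈ Q.support, (Q.coeff i : ℝ) * α ^ i := by
      rw [hT, hU, val_sum, val_sum, ← Finset.sum_sub_distrib]
      apply Finset.sum_congr rfl
      intro i _
      rw [val_replicate, val_replicate, ← sub_mul]
      congr 1
      have := Int.toNat_sub_toNat_neg (Q.coeff i)
      have : (((Q.coeff i).toNat : ℤ) : ℝ) - (((-(Q.coeff i)).toNat : ℤ) : ℝ) = ((Q.coeff i : ℤ) : ℝ) := by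
        rw [← Int.cast_sub, this]
      push_cast at this ⊢
      linarith
    have haeval : (Polynomial.aeval α Q : ℝ) = ∑ i ∈ Q.support, (Q.coeff i : ℝ) * α ^ i := by
      rw [Polynomial.aeval_def, Polynomial.eval₂_eq_sum, Polynomial.sum_def]
      apply Finset.sum_congr rfl
      intro i _
      simp
    rw [← haeval, hQα] at hdiff
    linarith [hdiff]
  have hcardTU : Multiset.card T ≠ Multiset.card U := by
    intro h
    apply hQ1
    have hdiff : (Multiset.card T : ℤ) - Multiset.card U = Q.eval 1 := by
      rw [hT, hU, card_sum, card_sum]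
      push_cast
      rw [← Finset.sum_sub_distrib]
      rw [Polynomial.eval_eq_sum, Polynomial.sum_def]
      apply Finset.sum_congr rfl
      intro i _
      rw [Multiset.card_replicate, Multiset.card_replicate, one_pow, mul_one]
      exact Int.toNat_sub_toNat_neg (Q.coeff i)
    rw [h, sub_self] at hdiff
    exact hdiff.symm
  have hTne : T ≠ 0 := by
    intro h
    rw [h] at hvalTU
    simp only [val_zero] at hvalTU
    have := val_eq_zero h0 hvalTU.symm
    rw [h, this] at hcardTU
    exact hcardTU rfl
  have hUne : U ≠ 0 := by
    intro h
    rw [h] at hvalTU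
    simp only [val_zero] at hvalTU
    have := val_eq_zero h0 hvalTU
    rw [h, this] at hcardTU
    exact hcardTU rfl
  rcases lt_or_gt_of_ne hcardTU with h | h
  · exact ⟨T, U, hvalTU, Multiset.card_pos.2 hTne, h⟩
  · exact ⟨U, T, hvalTU.symm, Multiset.card_pos.2 hUne, h⟩

end Stmt7Aux

open Stmt7Aux in
theorem stmt7 (α : ℝ) (h0 : 0 < α) (halg : IsAlgebraic ℚ α)
    (hat : IsAtomicM (Nmon α)) (hfg : ¬ (Nmon α).FG) :
    ∀ C : ℝ, ∃ x ∈ Nmon α, x ≠ 0 ∧ ∃ l L : ℕ,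
      l ∈ LSet (Nmon α) x ∧ L ∈ LSet (Nmon α) x ∧ C * l < L := by
  intro C
  have hne1 : α ≠ 1 := by
    intro h
    subst h
    apply hfg
    refine ⟨{1}, ?_⟩
    have : (Set.range fun n : ℕ => (1 : ℝ) ^ n) = {1} := by
      simp [Set.range_const]
    simp [Nmon, this]
  have hatom := all_powers_atoms h0 hat hfg
  obtain ⟨T, U, hval, hTpos, hlt⟩ := exists_rel h0 halg hne1
  set p := Multiset.card T
  set q := Multiset.card U
  have hppos : (0 : ℝ) < p := by exact_mod_cast hTpos
  have hr : (1 : ℝ) < (q : ℝ) / p := (one_lt_div hppos).2 (by exact_mod_cast hlt)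
  obtain ⟨k, hk⟩ := pow_unbounded_of_one_lt C hr
  have hTne : T ≠ 0 := fun h => by simp [p, h] at hTpos
  refine ⟨(val α T) ^ k, ?_, ?_, p ^ k, q ^ k, ?_, ?_, ?_⟩
  · rw [← val_powE]; exact val_mem _ _
  · exact ne_of_gt (pow_pos (val_pos h0 hTne) k)
  · refine ⟨(powE T k).map fun n => α ^ n, ?_, ?_, ?_⟩
    · intro a ha
      obtain ⟨n, -, rfl⟩ := Multiset.mem_map.1 ha
      exact hatom n
    · exact val_powE α T k
    · rw [Multiset.card_map, card_powE]
  · refine ⟨(powE U k).map fun n => α ^ n, ?_, ?_, ?_⟩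
    · intro a ha
      obtain ⟨n, -, rfl⟩ := Multiset.mem_map.1 ha
      exact hatom n
    · rw [show ((powE U k).map fun n => α ^ n).sum = val α (powE U k) from rfl,
        val_powE, hval]
    · rw [Multiset.card_map, card_powE]
  · have hppk : (0 : ℝ) < (p : ℝ) ^ k := pow_pos hppos k
    have h1 : C * (p : ℝ) ^ k < ((q : ℝ) / p) ^ k * (p : ℝ) ^ k :=
      mul_lt_mul_of_pos_right hk hppk
    have h2 : ((q : ℝ) / p) ^ k * (p : ℝ) ^ k = (q : ℝ) ^ k := by
      rw [div_pow, div_mul_cancel₀]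
      exact ne_of_gt hppk
    push_cast
    rw [h2] at h1
    exact h1
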